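/- Let A = [[a,b],[c,d]] ∈ SL(2,ℤ) with |a+d| > 2, and let v ∈ ℚ ∪ {∞} be such that v and A·v are Farey-adjacent. Then the points Aⁿ·v for n ∈ ℤ are pairwise distinct, and for every integer n the points Aⁿ·v and Aⁿ⁺¹·v are Farey-adjacent. -/

import Mathlib

open OnePoint Matrix

/-- `SL(2,ℤ)`. -/
abbrev SL2Z := Matrix.SpecialLinearGroup (Fin 2) ℤ

/-- The Möbius action of `SL(2,ℤ)` on the rational projective line `ℚ ∪ {∞}`:
the matrix `[[a,b],[c,d]]` sends `x` to `(ax+b)/(cx+d)` (and `∞ = 1/0`). -/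
def mob (A : SL2Z) : OnePoint ℚ → OnePoint ℚ
  | OnePoint.infty =>
      if (A.1 1 0 : ℚ) = 0 then OnePoint.infty
      else OnePoint.some ((A.1 0 0 : ℚ) / (A.1 1 0 : ℚ))
  | OnePoint.some x =>
      if (A.1 1 0 : ℚ) * x + (A.1 1 1 : ℚ) = 0 then OnePoint.infty
      else OnePoint.some (((A.1 0 0 : ℚ) * x + (A.1 0 1 : ℚ)) /
        ((A.1 1 0 : ℚ) * x + (A.1 1 1 : ℚ)))

/-- Farey adjacency on `ℚ ∪ {∞}`: the reduced fractions `p/q` and `r/s`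
are adjacent iff `|ps - qr| = 1`, where `∞ = 1/0`.  (Rationals in Lean are
stored in lowest terms with positive denominator.) -/
def fareyAdj : OnePoint ℚ → OnePoint ℚ → Prop
  | OnePoint.infty, OnePoint.infty => False
  | OnePoint.infty, OnePoint.some x => x.den = 1
  | OnePoint.some x, OnePoint.infty => x.den = 1
  | OnePoint.some x, OnePoint.some y => |x.num * (y.den : ℤ) - (x.den : ℤ) * y.num| = 1

namespace FareyAux

/-- numerator/denominator pair of a point of `ℚ ∪ {∞}`. -/
def pr : OnePoint ℚ → ℤ × ℤ
  | OnePoint.infty => (1, 0)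
  | OnePoint.some x => (x.num, (x.den : ℤ))

/-- linear action of an `SL2Z` matrix on pairs. -/
def act (A : SL2Z) (w : ℤ × ℤ) : ℤ × ℤ :=
  (A.1 0 0 * w.1 + A.1 0 1 * w.2, A.1 1 0 * w.1 + A.1 1 1 * w.2)

/-- point of `ℚ ∪ {∞}` determined by a pair. -/
def ofPair (w : ℤ × ℤ) : OnePoint ℚ :=
  if w.2 = 0 then OnePoint.infty else OnePoint.some ((w.1 : ℚ) / (w.2 : ℚ))

/-- determinant pairing. -/
def D (w u : ℤ × ℤ) : ℤ := w.1 * u.2 - w.2 * u.1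

lemma act_act (A B : SL2Z) (w : ℤ × ℤ) : act A (act B w) = act (A * B) w := by
  refine Prod.ext ?_ ?_ <;>
    simp only [act, Matrix.SpecialLinearGroup.coe_mul, Matrix.mul_apply, Fin.sum_univ_two] <;>
    ring

lemma act_one (w : ℤ × ℤ) : act 1 w = w := by
  simp [act, Matrix.SpecialLinearGroup.coe_one, Matrix.one_apply]

lemma act_neg (A : SL2Z) (w : ℤ × ℤ) : act A (-w) = -(act A w) := by
  refine Prod.ext ?_ ?_ <;> simp [act] <;> ring

lemma detA (A : SL2Z) : A.1 0 0 * A.1 1 1 - A.1 0 1 * A.1 1 0 = 1 := by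
  have h := A.2
  rwa [Matrix.det_fin_two] at h

lemma D_act (A : SL2Z) (w u : ℤ × ℤ) : D (act A w) (act A u) = D w u := by
  have h := detA A
  simp only [D, act]
  linear_combination (w.1 * u.2 - w.2 * u.1) * h

lemma D_neg_left (w u : ℤ × ℤ) : D (-w) u = -(D w u) := by simp [D]; ring
lemma D_neg_right (w u : ℤ × ℤ) : D w (-u) = -(D w u) := by simp [D]; ring

lemma mob_eq_ofPair (A : SL2Z) (v : OnePoint ℚ) : mob A v = ofPair (act A (pr v)) := by
  cases v with
  | infty =>
      by_cases hc : A.1 1 0 = 0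
      · simp [mob, pr, act, ofPair, hc]
      · simp [mob, pr, act, ofPair, hc]
  | coe x =>
      have hq : ((x.den : ℤ) : ℚ) ≠ 0 := by exact_mod_cast x.den_nz
      have hxd : x * ((x.den : ℤ) : ℚ) = (x.num : ℚ) := by
        push_cast
        exact Rat.mul_den_eq_num x
      have key : ((A.1 1 0 : ℚ) * x + (A.1 1 1 : ℚ)) * ((x.den : ℤ) : ℚ)
          = ((A.1 1 0 * x.num + A.1 1 1 * (x.den : ℤ) : ℤ) : ℚ) := by
        push_cast
        linear_combination (A.1 1 0 : ℚ) * hxd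
      by_cases hz : A.1 1 0 * x.num + A.1 1 1 * (x.den : ℤ) = 0
      · have hz2 : (A.1 1 0 : ℚ) * x + (A.1 1 1 : ℚ) = 0 := by
          rw [hz] at key
          push_cast at key
          exact (mul_eq_zero.mp key).resolve_right hq
        simp [mob, pr, act, ofPair, hz, hz2]
      · have hzq : ((A.1 1 0 * x.num + A.1 1 1 * (x.den : ℤ) : ℤ) : ℚ) ≠ 0 := by
          exact_mod_cast hz
        have hz2 : (A.1 1 0 : ℚ) * x + (A.1 1 1 : ℚ) ≠ 0 := by
          intro h
          rw [h, zero_mul] at key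
          exact hzq key.symm
        simp only [mob, pr, act, ofPair, if_neg hz, if_neg hz2]
        change _ = (if A.1 1 0 * x.num + A.1 1 1 * (x.den : ℤ) = 0 then ∞ else
          ((((A.1 0 0 * x.num + A.1 0 1 * (x.den : ℤ) : ℤ) : ℚ) /
            ((A.1 1 0 * x.num + A.1 1 1 * (x.den : ℤ) : ℤ) : ℚ) : ℚ) : OnePoint ℚ))
        rw [if_neg hz]
        congr 1
        rw [div_eq_div_iff hz2 hzq]
        push_cast
        linear_combination ((A.1 0 0 : ℚ) * (A.1 1 1 : ℚ) - (A.1 0 1 : ℚ) * (A.1 1 0 : ℚ)) * hxd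

lemma pr_coprime (v : OnePoint ℚ) : IsCoprime (pr v).1 (pr v).2 := by
  cases v with
  | infty => exact isCoprime_one_left
  | coe x =>
      rw [Int.isCoprime_iff_nat_coprime]
      simpa [pr] using x.reduced

lemma act_coprime (A : SL2Z) (w : ℤ × ℤ) (h : IsCoprime w.1 w.2) :
    IsCoprime (act A w).1 (act A w).2 := by
  obtain ⟨u, t, hut⟩ := h
  have hw : act A⁻¹ (act A w) = w := by
    rw [act_act, inv_mul_cancel, act_one]
  have h1 : (A⁻¹).1 0 0 * (act A w).1 + (A⁻¹).1 0 1 * (act A w).2 = w.1 :=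
    congrArg Prod.fst hw
  have h2 : (A⁻¹).1 1 0 * (act A w).1 + (A⁻¹).1 1 1 * (act A w).2 = w.2 :=
    congrArg Prod.snd hw
  refine ⟨u * (A⁻¹).1 0 0 + t * (A⁻¹).1 1 0, u * (A⁻¹).1 0 1 + t * (A⁻¹).1 1 1, ?_⟩
  linear_combination u * h1 + t * h2 + hut

lemma pr_ofPair (w : ℤ × ℤ) (h : IsCoprime w.1 w.2) :
    pr (ofPair w) = w ∨ pr (ofPair w) = -w := by
  rcases lt_trichotomy w.2 0 with h2 | h2 | h2
  · right
    have hne : w.2 ≠ 0 := ne_of_lt h2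
    have hval : ((w.1 : ℚ) / (w.2 : ℚ)) = (((-w.1 : ℤ) : ℚ) / ((-w.2 : ℤ) : ℚ)) := by
      push_cast
      rw [neg_div_neg_eq]
    have hcop : (-w.1).natAbs.Coprime (-w.2).natAbs := by
      rw [Int.natAbs_neg, Int.natAbs_neg]
      exact Int.isCoprime_iff_nat_coprime.mp h
    have hnum := Rat.num_div_eq_of_coprime (a := -w.1) (b := -w.2) (by omega) hcop
    have hden := Rat.den_div_eq_of_coprime (a := -w.1) (b := -w.2) (by omega) hcop
    simp only [ofPair, if_neg hne, pr, hval]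
    refine Prod.ext ?_ ?_
    · simpa using hnum
    · simpa using hden
  · have h1 : w.1 = 1 ∨ w.1 = -1 := by
      rw [h2] at h
      exact Int.isUnit_iff.mp (isCoprime_zero_right.mp h)
    rcases h1 with h1 | h1
    · left
      simp only [ofPair, h2, if_pos rfl, pr]
      exact Prod.ext (by simp [h1]) (by simp [h2])
    · right
      simp only [ofPair, h2, if_pos rfl, pr]
      exact Prod.ext (by simp [h1]) (by simp [h2])
  · left
    have hne : w.2 ≠ 0 := ne_of_gt h2
    have hcop : w.1.natAbs.Coprime w.2.natAbs := Int.isCoprime_iff_nat_coprime.mp h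
    have hnum := Rat.num_div_eq_of_coprime (a := w.1) (b := w.2) h2 hcop
    have hden := Rat.den_div_eq_of_coprime (a := w.1) (b := w.2) h2 hcop
    simp only [ofPair, if_neg hne, pr]
    refine Prod.ext ?_ ?_
    · simpa using hnum
    · simpa using hden

lemma pr_mob (A : SL2Z) (v : OnePoint ℚ) :
    pr (mob A v) = act A (pr v) ∨ pr (mob A v) = -(act A (pr v)) := by
  rw [mob_eq_ofPair]
  exact pr_ofPair _ (act_coprime A _ (pr_coprime v))

lemma ofPair_neg (w : ℤ × ℤ) : ofPair (-w) = ofPair w := by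
  by_cases h : w.2 = 0
  · simp [ofPair, h]
  · have h' : -w.2 ≠ 0 := neg_ne_zero.mpr h
    simp only [ofPair, Prod.snd_neg, Prod.fst_neg, if_neg h', if_neg h]
    push_cast
    rw [neg_div_neg_eq]

lemma mob_mul (A B : SL2Z) (v : OnePoint ℚ) : mob (A * B) v = mob A (mob B v) := by
  rw [mob_eq_ofPair A (mob B v)]
  rcases pr_mob B v with h | h <;> rw [h]
  · rw [act_act, mob_eq_ofPair]
  · rw [act_neg, ofPair_neg, act_act, mob_eq_ofPair]

lemma mob_one (v : OnePoint ℚ) : mob 1 v = v := by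
  cases v with
  | infty => simp [mob]
  | coe x => simp [mob]

lemma fareyAdj_iff (x y : OnePoint ℚ) : fareyAdj x y ↔ |D (pr x) (pr y)| = 1 := by
  cases x with
  | infty =>
      cases y with
      | infty => simp [fareyAdj, D, pr]
      | coe b =>
          simp only [fareyAdj, D, pr, one_mul, zero_mul, sub_zero]
          rw [abs_of_nonneg (by positivity)]
          exact_mod_cast Iff.symm Nat.cast_inj
  | coe a =>
      cases y with
      | infty =>
          simp only [fareyAdj, D, pr, mul_zero, mul_one, zero_sub, abs_neg]
          rw [abs_of_nonneg (by positivity)]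
          exact_mod_cast Iff.symm Nat.cast_inj
      | coe b => exact Iff.rfl

lemma fareyAdj_mob (A : SL2Z) (x y : OnePoint ℚ) (h : fareyAdj x y) :
    fareyAdj (mob A x) (mob A y) := by
  rw [fareyAdj_iff] at h ⊢
  rcases pr_mob A x with hx | hx <;> rcases pr_mob A y with hy | hy <;>
    rw [hx, hy] <;>
    simp only [D_neg_left, D_neg_right, abs_neg, neg_neg, D_act] <;>
    exact h

lemma trace_aux (a b c d w1 w2 ε : ℤ) (hdet : a * d - b * c = 1) (hε : ε * ε = 1)
    (e1 : a * w1 + b * w2 = ε * w1) (e2 : c * w1 + d * w2 = ε * w2)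
    (hw : w2 ≠ 0 ∨ (w1 = 1 ∧ w2 = 0)) : |a + d| ≤ 2 := by
  have hε' : ε = 1 ∨ ε = -1 := Int.isUnit_iff.mp (IsUnit.of_mul_eq_one (a := ε) ε hε)
  rcases hw with hw2 | ⟨hw1, hw2⟩
  · by_cases hw1 : w1 = 0
    · -- b * w2 = 0, d = ε, then a = ε
      subst hw1
      have hb : b = 0 := by
        have : b * w2 = 0 := by linarith [e1]
        exact (mul_eq_zero.mp this).resolve_right hw2
      have hd : d = ε := by
        have : d * w2 = ε * w2 := by linarith [e2]
        exact mul_right_cancel₀ hw2 this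
      have ha : a * ε = 1 := by rw [hb] at hdet; rw [hd] at hdet; linarith
      rw [abs_le]
      rcases hε' with h | h <;> rw [h] at ha hd <;> constructor <;> omega
    · have h3 : (ε * (a + d) - 2) * (w1 * w2) = 0 := by
        linear_combination (ε - d) * w2 * e1 + b * w2 * e2 + (w1 * w2) * hε + (w1 * w2) * hdet
      have h4 : ε * (a + d) - 2 = 0 :=
        (mul_eq_zero.mp h3).resolve_right (mul_ne_zero hw1 hw2)
      rw [abs_le]
      rcases hε' with h | h <;> rw [h] at h4 <;> constructor <;> omega
  · subst hw1; subst hw2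
    have ha : a = ε := by linarith [e1]
    have hc : c = 0 := by linarith [e2]
    have hd : ε * d = 1 := by rw [ha, hc] at hdet; linarith
    rw [abs_le]
    rcases hε' with h | h <;> rw [h] at ha hd <;> constructor <;> omega

lemma trace_le_of_fixed (B : SL2Z) (v : OnePoint ℚ) (h : mob B v = v) :
    |B.1 0 0 + B.1 1 1| ≤ 2 := by
  have h2 := pr_mob B v
  rw [h] at h2
  have hw : (pr v).2 ≠ 0 ∨ ((pr v).1 = 1 ∧ (pr v).2 = 0) := by
    cases v with
    | infty => right; exact ⟨rfl, rfl⟩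
    | coe x => left; simp [pr]
  rcases h2 with h2 | h2
  · have e1 : B.1 0 0 * (pr v).1 + B.1 0 1 * (pr v).2 = 1 * (pr v).1 := by
      have := congrArg Prod.fst h2; simp [act] at this; linarith
    have e2 : B.1 1 0 * (pr v).1 + B.1 1 1 * (pr v).2 = 1 * (pr v).2 := by
      have := congrArg Prod.snd h2; simp [act] at this; linarith
    exact trace_aux _ _ _ _ _ _ 1 (detA B) (by ring) e1 e2 hw
  · have e1 : B.1 0 0 * (pr v).1 + B.1 0 1 * (pr v).2 = (-1) * (pr v).1 := by
      have := congrArg Prod.fst h2; simp [act] at this; linarith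
    have e2 : B.1 1 0 * (pr v).1 + B.1 1 1 * (pr v).2 = (-1) * (pr v).2 := by
      have := congrArg Prod.snd h2; simp [act] at this; linarith
    exact trace_aux _ _ _ _ _ _ (-1) (detA B) (by ring) e1 e2 hw

/-- Chebyshev-like sequence. -/
def cheb (t : ℤ) : ℕ → ℤ
  | 0 => 0
  | 1 => 1
  | (n+2) => t * cheb t (n+1) - cheb t n

lemma cheb_abs {t : ℤ} (ht : 3 ≤ |t|) : ∀ n, |cheb t n| < |cheb t (n+1)|
  | 0 => by simp [cheb]
  | (n+1) => by
    have ih := cheb_abs ht n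
    have h2 : |t * cheb t (n+1)| - |cheb t n| ≤ |t * cheb t (n+1) - cheb t n| :=
      abs_sub_abs_le_abs_sub _ _
    have h3 : 3 * |cheb t (n+1)| ≤ |t| * |cheb t (n+1)| :=
      mul_le_mul_of_nonneg_right ht (abs_nonneg _)
    have h4 : |t * cheb t (n+1)| = |t| * |cheb t (n+1)| := abs_mul _ _
    show |cheb t (n+1)| < |cheb t (n+2)|
    have h5 : cheb t (n+2) = t * cheb t (n+1) - cheb t n := rfl
    rw [h5]
    linarith [abs_nonneg (cheb t (n+1))]

lemma CH (A : SL2Z) :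
    A.1 * A.1 = (A.1 0 0 + A.1 1 1) • A.1 - (1 : Matrix (Fin 2) (Fin 2) ℤ) := by
  have h := detA A
  ext i j
  simp only [Matrix.mul_apply, Fin.sum_univ_two, Matrix.sub_apply, Matrix.smul_apply,
    smul_eq_mul, Matrix.one_apply]
  fin_cases i <;> fin_cases j <;> simp <;>
    first
    | linear_combination h
    | linear_combination -h
    | ring

lemma pow_rep (A : SL2Z) : ∀ n : ℕ,
    A.1 ^ (n + 1) = cheb (A.1 0 0 + A.1 1 1) (n + 1) • A.1 -
      cheb (A.1 0 0 + A.1 1 1) n • (1 : Matrix (Fin 2) (Fin 2) ℤ)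
  | 0 => by simp [cheb]
  | (n+1) => by
    have ih := pow_rep A n
    have h5 : cheb (A.1 0 0 + A.1 1 1) (n+2)
        = (A.1 0 0 + A.1 1 1) * cheb (A.1 0 0 + A.1 1 1) (n+1)
          - cheb (A.1 0 0 + A.1 1 1) n := rfl
    calc A.1 ^ (n + 2) = A.1 ^ (n+1) * A.1 := by rw [pow_succ]
    _ = (cheb (A.1 0 0 + A.1 1 1) (n + 1) • A.1 -
          cheb (A.1 0 0 + A.1 1 1) n • (1 : Matrix (Fin 2) (Fin 2) ℤ)) * A.1 := by rw [ih]
    _ = cheb (A.1 0 0 + A.1 1 1) (n + 1) • (A.1 * A.1) -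
          cheb (A.1 0 0 + A.1 1 1) n • A.1 := by
        rw [sub_mul, smul_mul_assoc, smul_mul_assoc, one_mul]
    _ = _ := by
        rw [CH A, h5]
        rw [smul_sub]
        module

lemma trace_pow_big (A : SL2Z) (ht : 3 ≤ |A.1 0 0 + A.1 1 1|) (n : ℕ) :
    3 ≤ |(A.1 ^ (n+1)) 0 0 + (A.1 ^ (n+1)) 1 1| := by
  set t := A.1 0 0 + A.1 1 1 with htdef
  have hrep := pow_rep A n
  have htr : (A.1 ^ (n+1)) 0 0 + (A.1 ^ (n+1)) 1 1 = cheb t (n+1) * t - 2 * cheb t n := by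
    rw [hrep]
    simp only [Matrix.sub_apply, Matrix.smul_apply, smul_eq_mul, Matrix.one_apply_eq]
    ring
  rw [htr]
  have h1 : |cheb t (n+1) * t| - |2 * cheb t n| ≤ |cheb t (n+1) * t - 2 * cheb t n| :=
    abs_sub_abs_le_abs_sub _ _
  have h2 : |cheb t (n+1) * t| = |cheb t (n+1)| * |t| := abs_mul _ _
  have h3 : |2 * cheb t n| = 2 * |cheb t n| := by rw [abs_mul]; norm_num
  have h4 : ∀ m, |cheb t m| < |cheb t (m+1)| := cheb_abs ht
  have h5 := h4 n
  have h6 : 0 ≤ |cheb t n| := abs_nonneg _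
  have h7 : |cheb t (n+1)| * 3 ≤ |cheb t (n+1)| * |t| :=
    mul_le_mul_of_nonneg_left ht (abs_nonneg _)
  linarith

end FareyAux

open FareyAux in
theorem orbit_distinct_and_adjacent (A : SL2Z)
    (hyp : |A.1 0 0 + A.1 1 1| > 2)
    (v : OnePoint ℚ) (hv : fareyAdj v (mob A v)) :
    (∀ m n : ℤ, m ≠ n → mob (A ^ m) v ≠ mob (A ^ n) v) ∧
    (∀ n : ℤ, fareyAdj (mob (A ^ n) v) (mob (A ^ (n + 1)) v)) := by
  have comp : ∀ (j k : ℤ) (u : OnePoint ℚ),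
      mob (A ^ (j + k)) u = mob (A ^ j) (mob (A ^ k) u) := by
    intro j k u
    rw [_root_.zpow_add, mob_mul]
  have h0 : ∀ u : OnePoint ℚ, mob (A ^ (0 : ℤ)) u = u := by
    intro u; rw [zpow_zero, mob_one]
  have key : ∀ k : ℤ, 0 < k → mob (A ^ k) v ≠ v := by
    intro k hk hfix
    obtain ⟨n, hn⟩ : ∃ n : ℕ, k.toNat = n + 1 := ⟨k.toNat - 1, by omega⟩
    have hknat : A ^ k = A ^ ((n + 1 : ℕ) : ℤ) := by rw [← hn]; congr 1; omega
    rw [hknat, zpow_natCast] at hfix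
    have h1 := trace_le_of_fixed (A ^ (n + 1)) v hfix
    have h2 := trace_pow_big A (by omega) n
    rw [Matrix.SpecialLinearGroup.coe_pow] at h1
    linarith
  constructor
  · intro m n hmn heq
    have hk : mob (A ^ (-n + m)) v = v := by
      have h1 := congrArg (mob (A ^ (-n))) heq
      rw [← comp, ← comp, neg_add_cancel, h0] at h1
      exact h1
    have hk0 : -n + m ≠ 0 := by omega
    rcases lt_trichotomy (-n + m) 0 with hlt | hzero | hgt
    · have h2 := congrArg (mob (A ^ (-(-n + m)))) hk
      rw [← comp, neg_add_cancel, h0] at h2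
      exact key (-(-n + m)) (by omega) h2.symm
    · exact hk0 hzero
    · exact key _ hgt hk
  · intro n
    have h1 : mob (A ^ (n + 1)) v = mob (A ^ n) (mob A v) := by
      rw [comp n 1, zpow_one]
    rw [h1]
    exact fareyAdj_mob (A ^ n) v (mob A v) hv
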